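/- Semigroup property of the DR fixed-point relocator: Let A be maximally monotone on a real Hilbert space X, and for γ, δ > 0 define Q_{δ←γ} := (δ/γ)·Id + (1 − δ/γ)·J_{γA}. Then for all γ, δ, ε > 0, Q_{ε←δ} ∘ Q_{δ←γ} = Q_{ε←γ} as operators on X. -/

import Mathlib

open Filter
open scoped RealInnerProductSpace NNReal

/-- A set-valued operator is monotone. -/
def IsMonotoneOp {X : Type*} [NormedAddCommGroup X] [InnerProductSpace ℝ X]
    (A : X → Set X) : Prop :=
  ∀ ⦃x y u v : X⦄, u ∈ A x → v ∈ A y → 0 ≤ ⟪x - y, u - v⟫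

/-- A set-valued operator is maximally monotone. -/
def IsMaximalMonotoneOp {X : Type*} [NormedAddCommGroup X] [InnerProductSpace ℝ X]
    (A : X → Set X) : Prop :=
  IsMonotoneOp A ∧
    ∀ x u : X, (∀ y v : X, v ∈ A y → 0 ≤ ⟪x - y, u - v⟫) → u ∈ A x

/-- `J` is the resolvent of `γ • A`, i.e. `J = (Id + γ A)⁻¹`:
for every `x`, `x ∈ J x + γ • A (J x)`. -/
def IsResolventOf {X : Type*} [NormedAddCommGroup X] [InnerProductSpace ℝ X]
    (J : X → X) (A : X → Set X) (γ : ℝ) : Prop :=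
  ∀ x : X, γ⁻¹ • (x - J x) ∈ A (J x)

/-- Uniqueness of resolvent points for a monotone operator. -/
lemma resolvent_unique {X : Type*} [NormedAddCommGroup X] [InnerProductSpace ℝ X]
    (A : X → Set X) (hA : IsMonotoneOp A) {δ : ℝ} (hδ : 0 < δ) {y u v : X}
    (hu : δ⁻¹ • (y - u) ∈ A u) (hv : δ⁻¹ • (y - v) ∈ A v) : u = v := by
  have h := hA hu hv
  have h1 : δ⁻¹ • (y - u) - δ⁻¹ • (y - v) = δ⁻¹ • -(u - v) := by
    rw [← smul_sub]; congr 1; abel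
  rw [h1, real_inner_smul_right, inner_neg_right, real_inner_self_eq_norm_sq] at h
  have hδi : 0 < δ⁻¹ := inv_pos.mpr hδ
  have hn : ‖u - v‖ = 0 := by
    by_contra h0
    have hp : 0 < ‖u - v‖ := lt_of_le_of_ne (norm_nonneg _) (Ne.symm h0)
    nlinarith [mul_pos hδi (mul_pos hp hp)]
  exact sub_eq_zero.mp (norm_eq_zero.mp hn)

theorem DR_relocator_semigroup
    {X : Type*} [NormedAddCommGroup X] [InnerProductSpace ℝ X] [CompleteSpace X]
    (A : X → Set X) (hA : IsMaximalMonotoneOp A)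
    (J : ℝ → X → X) (hJ : ∀ γ : ℝ, 0 < γ → IsResolventOf (J γ) A γ) :
    ∀ γ δ ε : ℝ, 0 < γ → 0 < δ → 0 < ε → ∀ x : X,
      (ε / δ) • ((δ / γ) • x + (1 - δ / γ) • J γ x)
          + (1 - ε / δ) • J δ ((δ / γ) • x + (1 - δ / γ) • J γ x)
        = (ε / γ) • x + (1 - ε / γ) • J γ x := by
  intro γ δ ε hγ hδ hε x
  set y := (δ / γ) • x + (1 - δ / γ) • J γ x with hy
  have hkey : J δ y = J γ x := by
    refine resolvent_unique A hA.1 hδ (hJ δ hδ y) ?_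
    have h1 : δ⁻¹ • (y - J γ x) = γ⁻¹ • (x - J γ x) := by
      rw [hy]
      rw [show (δ / γ) • x + (1 - δ / γ) • J γ x - J γ x = (δ / γ) • (x - J γ x) by
        rw [smul_sub]; module]
      rw [smul_smul]
      congr 1
      field_simp
    rw [h1]
    exact hJ γ hγ x
  rw [hkey, hy]
  rw [smul_add, smul_smul, smul_smul]
  rw [show ε / δ * (δ / γ) = ε / γ by field_simp]
  rw [show ε / δ * (1 - δ / γ) = ε / δ - ε / γ by field_simp]
  module
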